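/- arXiv:1609.02447 — 2 statements merged into one kernel-verified Lean document; each statement's English description precedes it below -/
import Mathlib

section
/- Let {ξ_z}_{z∈ℤ²} be i.i.d. uniform [0,1] random variables. For each i ≥ 1 let S_i = {z ∈ ℤ² : ξ_z ≤ 4^{-i}} and let V_i(z) be the Voronoi cell of z with respect to S_i (the set of points whose ℓ¹-nearest point of S_i, with ties broken by minimal ξ-value, equals that of z). Then for every fixed pair u, v ∈ ℤ², almost surely V_i(u) = V_i(v) for all sufficiently large i. -/
open MeasureTheory Filter Topology

/-- ℓ¹-distance on `ℤ²`. -/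
def d1 (u v : ℤ × ℤ) : ℤ := |u.1 - v.1| + |u.2 - v.2|

lemma d1_nonneg (a b : ℤ × ℤ) : 0 ≤ d1 a b :=
  add_nonneg (abs_nonneg _) (abs_nonneg _)

lemma d1_comm (a b : ℤ × ℤ) : d1 a b = d1 b a := by
  simp only [d1, abs_sub_comm]

lemma d1_triangle (a b c : ℤ × ℤ) : d1 a c ≤ d1 a b + d1 b c := by
  have h1 := abs_sub_le a.1 b.1 c.1
  have h2 := abs_sub_le a.2 b.2 c.2
  simp only [d1]; linarith

lemma abs_fst_le_d1 (a u : ℤ × ℤ) : |a.1 - u.1| ≤ d1 a u :=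
  le_add_of_nonneg_right (abs_nonneg _)

lemma abs_snd_le_d1 (a u : ℤ × ℤ) : |a.2 - u.2| ≤ d1 a u :=
  le_add_of_nonneg_left (abs_nonneg _)

/-- A square box (ℓ∞ ball) around `c` of radius `r`, as a finset. -/
noncomputable def boxF (c : ℤ × ℤ) (r : ℤ) : Finset (ℤ × ℤ) :=
  Finset.Icc (c.1 - r) (c.1 + r) ×ˢ Finset.Icc (c.2 - r) (c.2 + r)

lemma mem_boxF {c z : ℤ × ℤ} {r : ℤ} :
    z ∈ boxF c r ↔ |z.1 - c.1| ≤ r ∧ |z.2 - c.2| ≤ r := by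
  simp only [boxF, Finset.mem_product, Finset.mem_Icc, abs_le]
  constructor
  · rintro ⟨⟨h1, h2⟩, h3, h4⟩; exact ⟨⟨by omega, by omega⟩, by omega, by omega⟩
  · rintro ⟨⟨h1, h2⟩, h3, h4⟩; exact ⟨⟨by omega, by omega⟩, by omega, by omega⟩

lemma card_boxF (c : ℤ × ℤ) (r : ℕ) :
    (boxF c (r : ℤ)).card = (2 * r + 1) * (2 * r + 1) := by
  simp only [boxF, Finset.card_product, Int.card_Icc]
  have h1 : (c.1 + r + 1 - (c.1 - r)) = (2 * r + 1 : ℤ) := by ring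
  have h2 : (c.2 + r + 1 - (c.2 - r)) = (2 * r + 1 : ℤ) := by ring
  rw [h1, h2]
  have h3 : ((2 * (r:ℤ) + 1)).toNat = 2 * r + 1 := by omega
  rw [h3]

/-- `(1-p)^K ≤ exp(-j)` provided `j ≤ p * K`. -/
lemma one_sub_pow_le_exp (p : ℝ) (hp0 : 0 ≤ p) (hp1 : p ≤ 1) (K : ℕ) (j : ℕ)
    (h : (j : ℝ) ≤ p * K) : (1 - p) ^ K ≤ Real.exp (-(j : ℝ)) := by
  have h1 : (1 - p) ^ K ≤ (Real.exp (-p)) ^ K := by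
    apply pow_le_pow_left₀ (by linarith)
    have := Real.add_one_le_exp (-p); linarith
  have h2 : (Real.exp (-p)) ^ K = Real.exp ((K : ℝ) * (-p)) := (Real.exp_nat_mul _ _).symm
  have h3 : Real.exp ((K : ℝ) * (-p)) ≤ Real.exp (-(j : ℝ)) := by
    apply Real.exp_le_exp.2; nlinarith
  calc (1 - p) ^ K ≤ (Real.exp (-p)) ^ K := h1
    _ = _ := h2
    _ ≤ _ := h3

lemma Kbound (jr a q : ℝ) (hj : jr = 0 ∨ 1 ≤ jr) (ha : 1 ≤ a) (hq : 0 ≤ q)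
    (hqa : q * (a * a) = 1) : jr ≤ q * ((2 * (jr * a) + 1) * (2 * (jr * a) + 1)) := by
  have ha0 : 0 ≤ a := by linarith
  have hqa0 : 0 ≤ q * a := mul_nonneg hq ha0
  have expand : q * ((2 * (jr * a) + 1) * (2 * (jr * a) + 1))
      = 4 * jr ^ 2 * (q * (a * a)) + 4 * jr * (q * a) + q := by ring
  rw [hqa] at expand
  rcases hj with h | h
  · subst h; nlinarith
  · nlinarith [mul_nonneg (mul_nonneg (by linarith : (0:ℝ) ≤ jr) hq) ha0]

lemma cardP_bound (Dr jr a q : ℝ) (hD : 0 ≤ Dr) (hj : 0 ≤ jr) (ha : 1 ≤ a) (hq : 0 ≤ q)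
    (hqa : q * (a * a) = 1) :
    ((2 * (2 * (jr * a)) + 1) * (2 * (2 * (jr * a)) + 1))
        * ((2 * ((2 * (jr * a)) + 2 * Dr) + 1) * ((2 * Dr + 1) * 2)) * (q * q)
      ≤ 50 * (4 * Dr + 5) * (2 * Dr + 1) * (jr + 1) ^ 3 * (q * a) := by
  have ha0 : (0:ℝ) < a := by linarith
  have hjra : 0 ≤ jr * a := mul_nonneg hj ha0.le
  have h1 : (2 * (2 * (jr * a)) + 1) ≤ 5 * ((jr + 1) * a) := by nlinarith
  have h2 : (2 * ((2 * (jr * a)) + 2 * Dr) + 1) ≤ (4 * Dr + 5) * ((jr + 1) * a) := by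
    nlinarith [mul_nonneg (mul_nonneg hD hj) ha0.le,
      mul_nonneg hD (by linarith : (0:ℝ) ≤ a - 1)]
  have hA0 : (0:ℝ) ≤ 2 * (2 * (jr * a)) + 1 := by linarith
  have hB0 : (0:ℝ) ≤ 2 * ((2 * (jr * a)) + 2 * Dr) + 1 := by nlinarith
  have hC0 : (0:ℝ) ≤ (2 * Dr + 1) * 2 := by linarith
  have hq2 : (0:ℝ) ≤ q * q := mul_nonneg hq hq
  have step : ((2 * (2 * (jr * a)) + 1) * (2 * (2 * (jr * a)) + 1))
        * ((2 * ((2 * (jr * a)) + 2 * Dr) + 1) * ((2 * Dr + 1) * 2)) * (q * q)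
      ≤ ((5 * ((jr + 1) * a)) * (5 * ((jr + 1) * a)))
        * (((4 * Dr + 5) * ((jr + 1) * a)) * ((2 * Dr + 1) * 2)) * (q * q) := by
    gcongr
  refine step.trans (le_of_eq ?_)
  linear_combination (50 * (4 * Dr + 5) * (2 * Dr + 1) * (jr + 1) ^ 3 * (q * a)) * hqa

/-- for i.i.d. uniform `[0,1]` labels `ξ_z` on `ℤ²`, let
`S_i = {z : ξ_z ≤ 4^{-i}}` and let `f i ω z` be the ℓ¹-nearest point of `S_i` to `z`
(ties broken by minimal ξ-value).  Then for every fixed pair `u, v`, almost surely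
the Voronoi cells of `u` and `v` agree (`f i ω u = f i ω v`) for all large `i`. -/
theorem voronoi_cells_eventually_equal {Ω : Type*} [MeasurableSpace Ω]
    (ℙ : Measure Ω) [IsProbabilityMeasure ℙ]
    (ξ : ℤ × ℤ → Ω → ℝ)
    (hmeas : ∀ z, Measurable (ξ z))
    (hindep : ProbabilityTheory.iIndepFun ξ ℙ)
    (hunif : ∀ z, Measure.map (ξ z) ℙ = volume.restrict (Set.Icc (0 : ℝ) 1))
    (f : ℕ → Ω → ℤ × ℤ → ℤ × ℤ)
    (hf : ∀ᵐ ω ∂ℙ, ∀ i : ℕ, 1 ≤ i → ∀ z : ℤ × ℤ,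
      ξ (f i ω z) ω ≤ (4 : ℝ)⁻¹ ^ i ∧
      (∀ s : ℤ × ℤ, ξ s ω ≤ (4 : ℝ)⁻¹ ^ i → d1 (f i ω z) z ≤ d1 s z) ∧
      (∀ s : ℤ × ℤ, ξ s ω ≤ (4 : ℝ)⁻¹ ^ i → d1 s z = d1 (f i ω z) z →
        ξ (f i ω z) ω ≤ ξ s ω))
    (u v : ℤ × ℤ) :
    ∀ᵐ ω ∂ℙ, ∀ᶠ i in atTop, f i ω u = f i ω v := by
  classical
  set D : ℤ := d1 u v with hDdef
  have hD0 : 0 ≤ D := d1_nonneg u v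
  set Dn : ℕ := D.toNat with hDndef
  have hDnD : (Dn : ℤ) = D := Int.toNat_of_nonneg hD0
  -- parameters
  set p : ℕ → ℝ := fun j => (4 : ℝ)⁻¹ ^ j with hpdef
  have hp0 : ∀ j, 0 ≤ p j := fun j => by positivity
  have hp1 : ∀ j, p j ≤ 1 := fun j => pow_le_one₀ (by norm_num) (by norm_num)
  set m : ℕ → ℕ := fun j => j * 2 ^ j with hmdef
  set R : ℕ → ℕ := fun j => 2 * m j with hRdef
  -- single site probabilities
  have hle : ∀ (z : ℤ × ℤ) (j : ℕ), ℙ (ξ z ⁻¹' Set.Iic (p j)) = ENNReal.ofReal (p j) := by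
    intro z j
    rw [← Measure.map_apply (hmeas z) measurableSet_Iic, hunif z,
      Measure.restrict_apply measurableSet_Iic]
    have hset : Set.Iic (p j) ∩ Set.Icc (0:ℝ) 1 = Set.Icc 0 (p j) := by
      ext x
      simp only [Set.mem_inter_iff, Set.mem_Iic, Set.mem_Icc]
      exact ⟨fun h => ⟨h.2.1, h.1⟩, fun h => ⟨h.2, h.1, h.2.trans (hp1 j)⟩⟩
    rw [hset, Real.volume_Icc, sub_zero]
  have hgt : ∀ (z : ℤ × ℤ) (j : ℕ), ℙ (ξ z ⁻¹' Set.Ioi (p j)) = ENNReal.ofReal (1 - p j) := by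
    intro z j
    rw [← Measure.map_apply (hmeas z) measurableSet_Ioi, hunif z,
      Measure.restrict_apply measurableSet_Ioi]
    have hset : Set.Ioi (p j) ∩ Set.Icc (0:ℝ) 1 = Set.Ioc (p j) 1 := by
      ext x
      simp only [Set.mem_inter_iff, Set.mem_Ioi, Set.mem_Icc, Set.mem_Ioc]
      exact ⟨fun h => ⟨h.1, h.2.2⟩, fun h => ⟨h.1, (hp0 j).trans h.1.le, h.2⟩⟩
    rw [hset, Real.volume_Ioc]
  -- events
  set B : ℕ → Set Ω := fun j => ⋂ z ∈ boxF u (m j : ℤ), ξ z ⁻¹' Set.Ioi (p j) with hBdef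
  set P : ℕ → Finset ((ℤ × ℤ) × (ℤ × ℤ)) := fun j =>
    (boxF u ((R j + 2 * Dn : ℕ) : ℤ) ×ˢ boxF u ((R j + 2 * Dn : ℕ) : ℤ)).filter
      (fun q => q.1 ≠ q.2 ∧ d1 q.1 u ≤ (R j : ℤ) ∧ d1 q.1 u ≤ d1 q.2 u ∧
        d1 q.2 u ≤ d1 q.1 u + 2 * D) with hPdef
  set C : ℕ → Set Ω := fun j =>
    ⋃ q ∈ P j, (ξ q.1 ⁻¹' Set.Iic (p j) ∩ ξ q.2 ⁻¹' Set.Iic (p j)) with hCdef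
  -- bound on ℙ (B j)
  have hB : ∀ j, ℙ (B j) ≤ ENNReal.ofReal (Real.exp (-(j : ℝ))) := by
    intro j
    have hprod := hindep.measure_inter_preimage_eq_mul (S := boxF u (m j : ℤ))
      (sets := fun _ => Set.Ioi (p j)) (fun i _ => measurableSet_Ioi)
    have hBj : ℙ (B j) = ENNReal.ofReal (1 - p j) ^ (boxF u (m j : ℤ)).card := by
      rw [hBdef]
      simp only
      rw [hprod, Finset.prod_congr rfl (fun z _ => hgt z j), Finset.prod_const]
    rw [hBj, card_boxF u (m j), ← ENNReal.ofReal_pow (by linarith [hp1 j])]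
    apply ENNReal.ofReal_le_ofReal
    apply one_sub_pow_le_exp (p j) (hp0 j) (hp1 j)
    have hqa : p j * ((2:ℝ) ^ j * (2:ℝ) ^ j) = 1 := by
      rw [hpdef]; simp only [← mul_pow]; norm_num
    have hja : (1:ℝ) ≤ (2:ℝ) ^ j := one_le_pow₀ (by norm_num)
    have hKb := Kbound (j : ℝ) ((2:ℝ) ^ j) (p j)
      (by rcases Nat.eq_zero_or_pos j with h | h
          · left; simp [h]
          · right; exact_mod_cast h) hja (hp0 j) hqa
    calc (j : ℝ) ≤ p j * ((2 * ((j:ℝ) * 2 ^ j) + 1) * (2 * ((j:ℝ) * 2 ^ j) + 1)) := hKb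
      _ = p j * (((2 * (m j) + 1) * (2 * (m j) + 1) : ℕ) : ℝ) := by
          rw [hmdef]; push_cast; ring
  -- cardinality of the pair set
  have hPcard : ∀ j, (P j).card ≤
      (2 * (R j) + 1) * ((2 * (R j) + 1) * ((2 * (R j + 2 * Dn) + 1) * ((2 * Dn + 1) * 2))) := by
    intro j
    have hinj := Finset.card_le_card_of_injOn
      (f := fun q : (ℤ × ℤ) × (ℤ × ℤ) =>
        (q.1, (q.2.1, (d1 q.2 u - d1 q.1 u, decide (u.2 ≤ q.2.2)))))
      (s := P j)
      (t := boxF u ((R j : ℕ) : ℤ) ×ˢ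
        (Finset.Icc (u.1 - ((R j + 2 * Dn : ℕ) : ℤ)) (u.1 + ((R j + 2 * Dn : ℕ) : ℤ)) ×ˢ
          (Finset.Icc (0 : ℤ) (2 * D) ×ˢ (Finset.univ : Finset Bool))))
      ?_ ?_
    · refine hinj.trans (le_of_eq ?_)
      rw [Finset.card_product, Finset.card_product, Finset.card_product,
        card_boxF u (R j), Int.card_Icc, Int.card_Icc, Finset.card_univ]
      have e1 : (u.1 + ((R j + 2 * Dn : ℕ) : ℤ) + 1 - (u.1 - ((R j + 2 * Dn : ℕ) : ℤ)))
          = ((2 * (R j + 2 * Dn) + 1 : ℕ) : ℤ) := by push_cast; ring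
      have e2 : ((2 * D : ℤ) + 1 - 0) = ((2 * Dn + 1 : ℕ) : ℤ) := by
        rw [← hDnD]; push_cast; ring
      rw [e1, e2, Int.toNat_natCast, Int.toNat_natCast]
      simp only [Fintype.card_bool]
      ring
    · -- maps into target
      intro q hq
      rw [hPdef] at hq
      simp only [Finset.mem_coe, Finset.mem_filter, Finset.mem_product] at hq
      obtain ⟨⟨hq1, hq2⟩, hne, h1R, h12, h2b⟩ := hq
      simp only [Finset.mem_coe, Finset.mem_product, Finset.mem_Icc, Finset.mem_univ, and_true]
      have hcast : ((R j + 2 * Dn : ℕ) : ℤ) = (R j : ℤ) + 2 * D := by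
        push_cast [hDnD]; ring
      refine ⟨?_, ?_, ?_, ?_⟩
      · rw [mem_boxF]
        have ha1 := abs_fst_le_d1 q.1 u
        have ha2 := abs_snd_le_d1 q.1 u
        rw [abs_le] at ha1 ha2
        constructor <;> rw [abs_le] <;> omega
      · have hb1 := abs_fst_le_d1 q.2 u
        rw [abs_le] at hb1
        omega
      · omega
      · omega
    · -- injectivity
      intro q hq q' hq' heq
      simp only [Prod.mk.injEq] at heq
      obtain ⟨e1, e2, e3, e4⟩ := heq
      have hd1eq : d1 q.1 u = d1 q'.1 u := by rw [e1]
      have hd2eq : d1 q.2 u = d1 q'.2 u := by omega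
      have habs : |q.2.2 - u.2| = |q'.2.2 - u.2| := by
        simp only [d1] at hd2eq
        rw [e2] at hd2eq
        linarith
      have hiff : (u.2 ≤ q.2.2) ↔ (u.2 ≤ q'.2.2) := by
        constructor <;> intro h
        · exact of_decide_eq_true (e4 ▸ decide_eq_true h)
        · exact of_decide_eq_true (e4.symm ▸ decide_eq_true h)
      have h22 : q.2.2 = q'.2.2 := by
        rcases abs_eq_abs.mp habs with h | h <;> omega
      exact Prod.ext e1 (Prod.ext e2 h22)
  -- bound on ℙ (C j)
  set c : ℝ := 50 * (4 * (Dn : ℝ) + 5) * (2 * (Dn : ℝ) + 1) with hcdef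
  have hc0 : 0 ≤ c := by rw [hcdef]; positivity
  have hC : ∀ j, ℙ (C j) ≤ ENNReal.ofReal (c * ((j : ℝ) + 1) ^ 3 * (2⁻¹ : ℝ) ^ j) := by
    intro j
    have hstep1 : ℙ (C j) ≤ ∑ q ∈ P j, ℙ (ξ q.1 ⁻¹' Set.Iic (p j) ∩ ξ q.2 ⁻¹' Set.Iic (p j)) :=
      measure_biUnion_finset_le _ _
    have hstep2 : ∀ q ∈ P j,
        ℙ (ξ q.1 ⁻¹' Set.Iic (p j) ∩ ξ q.2 ⁻¹' Set.Iic (p j))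
          = ENNReal.ofReal (p j) * ENNReal.ofReal (p j) := by
      intro q hq
      rw [hPdef] at hq
      simp only [Finset.mem_filter] at hq
      have hne : q.1 ≠ q.2 := hq.2.1
      rw [(hindep.indepFun hne).measure_inter_preimage_eq_mul _ _ measurableSet_Iic measurableSet_Iic,
        hle q.1 j, hle q.2 j]
    set N : ℕ := (2 * (R j) + 1) * ((2 * (R j) + 1) *
      ((2 * (R j + 2 * Dn) + 1) * ((2 * Dn + 1) * 2))) with hNdef
    have hstep3 : ℙ (C j) ≤ (N : ENNReal) * (ENNReal.ofReal (p j) * ENNReal.ofReal (p j)) := by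
      refine hstep1.trans ?_
      rw [Finset.sum_congr rfl hstep2, Finset.sum_const, nsmul_eq_mul]
      gcongr
      exact_mod_cast hPcard j
    refine hstep3.trans ?_
    rw [← ENNReal.ofReal_mul (hp0 j), ← ENNReal.ofReal_natCast N,
      ← ENNReal.ofReal_mul (by positivity)]
    apply ENNReal.ofReal_le_ofReal
    have hqa : p j * ((2:ℝ) ^ j * (2:ℝ) ^ j) = 1 := by
      rw [hpdef]; simp only [← mul_pow]; norm_num
    have hja : (1:ℝ) ≤ (2:ℝ) ^ j := one_le_pow₀ (by norm_num)
    have hbd := cardP_bound (Dn : ℝ) (j : ℝ) ((2:ℝ) ^ j) (p j)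
      (by positivity) (by positivity) hja (hp0 j) hqa
    have hNr : (N : ℝ) = ((2 * (2 * ((j:ℝ) * 2 ^ j)) + 1) * (2 * (2 * ((j:ℝ) * 2 ^ j)) + 1))
        * ((2 * ((2 * ((j:ℝ) * 2 ^ j)) + 2 * (Dn:ℝ)) + 1) * ((2 * (Dn:ℝ) + 1) * 2)) := by
      rw [hNdef, hRdef, hmdef]; push_cast; ring
    have hpa : p j * (2:ℝ) ^ j = (2⁻¹ : ℝ) ^ j := by
      rw [hpdef]; simp only [← mul_pow]; norm_num
    calc (N : ℝ) * (p j * p j)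
        = ((2 * (2 * ((j:ℝ) * 2 ^ j)) + 1) * (2 * (2 * ((j:ℝ) * 2 ^ j)) + 1))
            * ((2 * ((2 * ((j:ℝ) * 2 ^ j)) + 2 * (Dn:ℝ)) + 1) * ((2 * (Dn:ℝ) + 1) * 2))
            * (p j * p j) := by rw [hNr]
      _ ≤ 50 * (4 * (Dn:ℝ) + 5) * (2 * (Dn:ℝ) + 1) * ((j:ℝ) + 1) ^ 3 * (p j * (2:ℝ) ^ j) := hbd
      _ = c * ((j : ℝ) + 1) ^ 3 * (2⁻¹ : ℝ) ^ j := by rw [hpa, hcdef]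
  -- the summable real bound
  set g : ℕ → ℝ := fun j => Real.exp (-(j : ℝ)) + c * ((j : ℝ) + 1) ^ 3 * (2⁻¹ : ℝ) ^ j with hgdef
  have hg0 : ∀ j, 0 ≤ g j := by
    intro j
    have h1 := Real.exp_nonneg (-(j:ℝ))
    have h2 : (0:ℝ) ≤ c * ((j : ℝ) + 1) ^ 3 * (2⁻¹ : ℝ) ^ j := by positivity
    rw [hgdef]; dsimp only; linarith
  have hgsum : Summable g := by
    apply Summable.add
    · have hxe : (fun j : ℕ => Real.exp (-(j : ℝ))) = fun j : ℕ => (Real.exp (-1)) ^ j := by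
        funext j
        rw [← Real.exp_nat_mul]
        norm_num
      rw [hxe]
      exact summable_geometric_of_lt_one (Real.exp_nonneg _) (Real.exp_lt_one_iff.2 (by norm_num))
    · have hk : ∀ k : ℕ, Summable (fun j : ℕ => ((j:ℝ)) ^ k * (2⁻¹:ℝ) ^ j) := fun k =>
        summable_pow_mul_geometric_of_norm_lt_one k (by rw [Real.norm_eq_abs, abs_of_pos] <;> norm_num)
      have hsum1 : Summable (fun j : ℕ => (((j:ℝ) + 1) ^ 3 * (2⁻¹:ℝ) ^ j)) := by
        have hS := ((hk 3).add (((hk 2).mul_left 3).add (((hk 1).mul_left 3).add (hk 0))))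
        refine hS.congr fun j => ?_
        ring
      exact (hsum1.mul_left c).congr fun j => by ring
  -- total bound and Borel–Cantelli
  have hunion : ∀ j, ℙ (B j ∪ C j) ≤ ENNReal.ofReal (g j) := by
    intro j
    refine (measure_union_le _ _).trans ?_
    rw [hgdef]
    dsimp only
    rw [ENNReal.ofReal_add (Real.exp_nonneg _) (by positivity)]
    exact add_le_add (hB j) (hC j)
  have htsum : ∑' i : ℕ, ℙ (B (i + 1) ∪ C (i + 1)) ≠ ⊤ := by
    have hs : Summable fun i : ℕ => g (i + 1) := (summable_nat_add_iff 1).2 hgsum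
    have hle2 : ∑' i : ℕ, ℙ (B (i + 1) ∪ C (i + 1)) ≤ ∑' i : ℕ, ENNReal.ofReal (g (i + 1)) :=
      ENNReal.tsum_le_tsum fun i => hunion (i + 1)
    have heq : ∑' i : ℕ, ENNReal.ofReal (g (i + 1)) = ENNReal.ofReal (∑' i : ℕ, g (i + 1)) :=
      (ENNReal.ofReal_tsum_of_nonneg (fun i => hg0 _) hs).symm
    exact ne_top_of_le_ne_top (heq ▸ ENNReal.ofReal_ne_top) hle2
  have hBC := MeasureTheory.ae_finite_setOf_mem (μ := ℙ)
    (s := fun i : ℕ => B (i + 1) ∪ C (i + 1)) htsum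
  filter_upwards [hf, hBC] with ω hω hfin
  rw [eventually_atTop]
  obtain ⟨N0, hN0⟩ := hfin.bddAbove
  refine ⟨N0 + 2, fun i hi => ?_⟩
  by_contra hne
  have hi1 : 1 ≤ i := by omega
  obtain ⟨hξa, hmina, -⟩ := hω i hi1 u
  obtain ⟨hξb, hminb, -⟩ := hω i hi1 v
  have hnotin : ω ∉ B i ∪ C i := by
    intro hmem
    have hmem' : i - 1 ∈ {k : ℕ | ω ∈ B (k + 1) ∪ C (k + 1)} := by
      simp only [Set.mem_setOf_eq]
      rwa [Nat.sub_add_cancel hi1]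
    have := hN0 hmem'
    omega
  have hnB : ω ∉ B i := fun h => hnotin (Or.inl h)
  have hnC : ω ∉ C i := fun h => hnotin (Or.inr h)
  -- extract a nearby point of S_i from ¬ B i
  have hz : ∃ z ∈ boxF u (m i : ℤ), ξ z ω ≤ p i := by
    by_contra hcon
    push_neg at hcon
    exact hnB (Set.mem_iInter₂.2 fun z hzm => Set.mem_preimage.2 (Set.mem_Ioi.2 (hcon z hzm)))
  obtain ⟨z, hzmem, hzle⟩ := hz
  have hzd : d1 z u ≤ (R i : ℤ) := by
    obtain ⟨h1, h2⟩ := mem_boxF.mp hzmem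
    have hRI : (R i : ℤ) = 2 * (m i : ℤ) := by rw [hRdef]; push_cast; ring
    simp only [d1]
    omega
  have hau : d1 (f i ω u) u ≤ (R i : ℤ) := (hmina z hzle).trans hzd
  have hbv : d1 (f i ω v) v ≤ d1 (f i ω u) v := hminb _ hξa
  have habu : d1 (f i ω u) u ≤ d1 (f i ω v) u := hmina _ hξb
  have h2b : d1 (f i ω v) u ≤ d1 (f i ω u) u + 2 * D := by
    have t1 : d1 (f i ω u) v ≤ d1 (f i ω u) u + d1 u v := d1_triangle _ _ _
    have t2 : d1 (f i ω v) u ≤ d1 (f i ω v) v + d1 v u := d1_triangle _ _ _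
    have t3 : d1 v u = D := by rw [hDdef, d1_comm]
    omega
  have hcast : ((R i + 2 * Dn : ℕ) : ℤ) = (R i : ℤ) + 2 * D := by
    push_cast [hDnD]; ring
  have hmemP : (f i ω u, f i ω v) ∈ P i := by
    rw [hPdef]
    simp only [Finset.mem_filter, Finset.mem_product]
    refine ⟨⟨?_, ?_⟩, hne, hau, habu, h2b⟩
    · rw [mem_boxF]
      have ha1 := abs_fst_le_d1 (f i ω u) u
      have ha2 := abs_snd_le_d1 (f i ω u) u
      constructor <;> rw [abs_le] <;> rw [abs_le] at ha1 ha2 <;> omega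
    · rw [mem_boxF]
      have hb1 := abs_fst_le_d1 (f i ω v) u
      have hb2 := abs_snd_le_d1 (f i ω v) u
      constructor <;> rw [abs_le] <;> rw [abs_le] at hb1 hb2 <;> omega
  exact hnC (Set.mem_iUnion₂.2 ⟨(f i ω u, f i ω v), hmemP,
    Set.mem_inter (Set.mem_preimage.2 (Set.mem_Iic.2 hξa))
      (Set.mem_preimage.2 (Set.mem_Iic.2 hξb))⟩)
end

section
/- Let T be a random pseudometric on ℤ² satisfying the extended shape theorem (for every ε > 0, a.s. for all |z| large, |T(z,z+y) − μ(y)| ≤ ε max{|z|,|y|} for all y, where μ is a norm), and let B : ℤ² × ℤ² → ℝ be an additive cocycle with |B(x,y)| ≤ T(x,y) for all x,y. Let ρ : ℝ² → ℝ be linear and suppose that for every v ∈ ℤ², almost surely lim_{n→∞} B(0, n v)/n = ρ(v). Then almost surely limsup_{|z|→∞} |B(0,z) − ρ(z)|/|z| = 0. -/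
open MeasureTheory Filter Topology

/-- Euclidean norm of a point of `ℤ²`. -/
noncomputable def znorm (z : ℤ × ℤ) : ℝ := Real.sqrt ((z.1 : ℝ) ^ 2 + (z.2 : ℝ) ^ 2)

/-- Embedding `ℤ² ↪ ℝ²`. -/
def toR (z : ℤ × ℤ) : ℝ × ℝ := ((z.1 : ℝ), (z.2 : ℝ))

noncomputable def rnorm (x : ℝ × ℝ) : ℝ := |x.1| + |x.2|

lemma znorm_nonneg (z : ℤ × ℤ) : 0 ≤ znorm z := Real.sqrt_nonneg _

lemma abs_fst_le (z : ℤ × ℤ) : |(z.1 : ℝ)| ≤ znorm z := by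
  rw [znorm, ← Real.sqrt_sq_eq_abs]
  exact Real.sqrt_le_sqrt (by nlinarith [sq_nonneg ((z.2 : ℝ))])

lemma abs_snd_le (z : ℤ × ℤ) : |(z.2 : ℝ)| ≤ znorm z := by
  rw [znorm, ← Real.sqrt_sq_eq_abs]
  exact Real.sqrt_le_sqrt (by nlinarith [sq_nonneg ((z.1 : ℝ))])

lemma znorm_le_rnorm (z : ℤ × ℤ) : znorm z ≤ rnorm (toR z) := by
  have h : znorm z ≤ Real.sqrt ((|(z.1:ℝ)| + |(z.2:ℝ)|) ^ 2) := by
    apply Real.sqrt_le_sqrt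
    nlinarith [sq_abs ((z.1:ℝ)), sq_abs ((z.2:ℝ)),
      mul_nonneg (abs_nonneg ((z.1:ℝ))) (abs_nonneg ((z.2:ℝ)))]
  rw [Real.sqrt_sq (by positivity)] at h
  simpa [rnorm, toR] using h

lemma rnorm_toR_le (z : ℤ × ℤ) : rnorm (toR z) ≤ 2 * znorm z := by
  have h1 := abs_fst_le z; have h2 := abs_snd_le z
  simp only [rnorm, toR]; linarith

lemma rnorm_add (x y : ℝ × ℝ) : rnorm (x + y) ≤ rnorm x + rnorm y := by
  simp only [rnorm, Prod.fst_add, Prod.snd_add]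
  have := abs_add_le x.1 y.1; have := abs_add_le x.2 y.2; linarith

lemma rnorm_neg (x : ℝ × ℝ) : rnorm (-x) = rnorm x := by
  simp [rnorm, Prod.fst_neg, Prod.snd_neg, abs_neg]

lemma toR_add (a b : ℤ × ℤ) : toR (a + b) = toR a + toR b := by
  simp [toR, Prod.ext_iff]

lemma toR_sub (a b : ℤ × ℤ) : toR (a - b) = toR a - toR b := by
  simp [toR, Prod.ext_iff]

lemma toR_nsmul (n : ℕ) (v : ℤ × ℤ) : toR (n • v) = (n : ℝ) • toR v := by
  have h1 : (n • v).1 = (n : ℤ) * v.1 := by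
    rw [Prod.smul_fst]; exact nsmul_eq_mul _ _
  have h2 : (n • v).2 = (n : ℤ) * v.2 := by
    rw [Prod.smul_snd]; exact nsmul_eq_mul _ _
  rw [Prod.ext_iff]
  constructor
  · show ((n • v).1 : ℝ) = (n:ℝ) * (v.1 : ℝ)
    rw [h1]; push_cast; ring
  · show ((n • v).2 : ℝ) = (n:ℝ) * (v.2 : ℝ)
    rw [h2]; push_cast; ring

set_option maxHeartbeats 2000000 in
lemma key_finite (T : (ℤ × ℤ) → (ℤ × ℤ) → ℝ) (μ : ℝ × ℝ → ℝ)
    (Cμ Cρ : ℝ) (hCμ : 0 ≤ Cμ) (hCρ : 0 ≤ Cρ)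
    (hμb : ∀ x, μ x ≤ Cμ * rnorm x)
    (B : (ℤ × ℤ) → (ℤ × ℤ) → ℝ)
    (hcoc : ∀ x y z : ℤ × ℤ, B x z = B x y + B y z)
    (hBT : ∀ x y : ℤ × ℤ, |B x y| ≤ T x y)
    (ρ : ℝ × ℝ →ₗ[ℝ] ℝ) (hρb : ∀ x, |ρ x| ≤ Cρ * rnorm x)
    (hshape : ∀ δ : ℝ, 0 < δ → ∃ N : ℝ, ∀ z : ℤ × ℤ, N ≤ znorm z →
      ∀ y : ℤ × ℤ, |T z (z + y) - μ (toR y)| ≤ δ * max (znorm z) (znorm y))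
    (hrad : ∀ v : ℤ × ℤ,
      Tendsto (fun n : ℕ => B 0 (n • v) / (n : ℝ)) atTop (nhds (ρ (toR v))))
    (ε : ℝ) (hε : 0 < ε) :
    {z : ℤ × ℤ | ε * znorm z < |B 0 z - ρ (toR z)|}.Finite := by
  -- choose M
  obtain ⟨M, hM⟩ := exists_nat_ge (max 2 (8 * (Cμ + Cρ + 1) / ε))
  have hM2 : (2:ℝ) ≤ M := le_trans (le_max_left _ _) hM
  have hM0 : (0:ℝ) < M := by linarith
  have hMε : 8 * (Cμ + Cρ + 1) ≤ ε * M := by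
    have h := le_trans (le_max_right _ _) hM
    rw [div_le_iff₀ hε] at h; linarith
  set δ : ℝ := ε / 32 with hδdef
  have hδ : 0 < δ := by positivity
  -- shape threshold
  obtain ⟨N₁, hN₁⟩ := hshape δ hδ
  set N₁' : ℝ := max N₁ 1 with hN₁'def
  have hN₁'1 : (1:ℝ) ≤ N₁' := le_max_right _ _
  -- uniform radial estimate over the box
  have hu : ∀ v : ℤ × ℤ, ∃ N : ℕ, ∀ n : ℕ, N ≤ n →
      |B 0 (n • v) - (n : ℝ) * ρ (toR v)| ≤ δ * n := by
    intro v
    have h := (Metric.tendsto_atTop.1 (hrad v)) δ hδ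
    obtain ⟨N, hN⟩ := h
    refine ⟨N + 1, fun n hn => ?_⟩
    have hn1 : 1 ≤ n := le_trans (by omega) hn
    have hnpos : (0:ℝ) < n := by exact_mod_cast hn1
    have h2 := (hN n (by omega)).le
    rw [Real.dist_eq] at h2
    calc |B 0 (n • v) - (n : ℝ) * ρ (toR v)|
        = (n : ℝ) * |B 0 (n • v) / n - ρ (toR v)| := by
          rw [← abs_of_pos hnpos, ← abs_mul]
          congr 1; field_simp; rw [abs_of_pos hnpos]; ring
      _ ≤ (n : ℝ) * δ := mul_le_mul_of_nonneg_left h2 hnpos.le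
      _ = δ * n := mul_comm _ _
  choose Nf hNf using hu
  set V : Finset (ℤ × ℤ) :=
    Finset.Icc (-(M:ℤ)) M ×ˢ Finset.Icc (-(M:ℤ)) M with hVdef
  set N₂ : ℕ := V.sup Nf with hN₂def
  have hN₂ : ∀ v ∈ V, ∀ n : ℕ, N₂ ≤ n →
      |B 0 (n • v) - (n : ℝ) * ρ (toR v)| ≤ δ * n :=
    fun v hv n hn => hNf v n (le_trans (Finset.le_sup hv) hn)
  clear_value N₂
  -- constant
  set K : ℝ := (δ + Cμ + Cρ) * (2 * M + 1) with hKdef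
  have hK0 : 0 ≤ K := by positivity
  set R : ℝ := (M : ℝ) * (N₂ + 1) + 4 * (N₁' + M + 1) + 4 * K / ε + 1 with hRdef
  have hR0 : 0 < R := by positivity
  -- main deterministic estimate
  have main : ∀ z : ℤ × ℤ, R ≤ znorm z → |B 0 z - ρ (toR z)| ≤ ε * znorm z := by
    intro z hz
    set r : ℝ := znorm z with hr
    have hr0 : 0 < r := lt_of_lt_of_le hR0 hz
    set v : ℤ × ℤ := (round ((M:ℝ) * z.1 / r), round ((M:ℝ) * z.2 / r)) with hvdef
    set n : ℕ := ⌊r / (M:ℝ)⌋₊ with hndef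
    set y : ℤ × ℤ := z - n • v with hydef
    have hnle : (n : ℝ) ≤ r / M := Nat.floor_le (by positivity)
    have hnlt : r / M < n + 1 := Nat.lt_floor_add_one _
    -- generic coordinate estimate
    have coord : ∀ (a : ℝ) (vi : ℤ), |a| ≤ r → vi = round ((M:ℝ) * a / r) →
        |(vi:ℝ)| ≤ M + 1/2 ∧ |a - (n:ℝ) * vi| ≤ r / (2*M) + (M + 1/2) := by
      intro a vi ha hvi
      have h1 : |(vi:ℝ) - (M:ℝ) * a / r| ≤ 1/2 := by
        rw [hvi, abs_sub_comm]; exact abs_sub_round ((M:ℝ) * a / r)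
      have hMar : |(M:ℝ) * a / r| ≤ M := by
        rw [abs_div, abs_mul, abs_of_pos hM0, abs_of_pos hr0, div_le_iff₀ hr0]
        nlinarith [abs_nonneg a]
      have hvia : |(vi:ℝ)| ≤ M + 1/2 := by
        calc |(vi:ℝ)| = |((vi:ℝ) - (M:ℝ)*a/r) + (M:ℝ)*a/r| := by ring_nf
          _ ≤ |(vi:ℝ) - (M:ℝ)*a/r| + |(M:ℝ)*a/r| := abs_add_le _ _
          _ ≤ 1/2 + M := by linarith
          _ = M + 1/2 := by ring
      refine ⟨hvia, ?_⟩
      have heq : a - (n:ℝ) * vi = (r/M) * ((M:ℝ)*a/r - vi) + (r/M - n) * vi := by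
        field_simp
        ring
      rw [heq]
      have hb1 : |(r/M) * ((M:ℝ)*a/r - vi)| ≤ (r/M) * (1/2) := by
        rw [abs_mul, abs_of_pos (div_pos hr0 hM0)]
        have : |(M:ℝ)*a/r - vi| ≤ 1/2 := by rw [abs_sub_comm]; exact h1
        exact mul_le_mul_of_nonneg_left this (div_pos hr0 hM0).le
      have hb2 : |(r/M - n) * vi| ≤ 1 * (M + 1/2) := by
        rw [abs_mul]
        apply mul_le_mul _ hvia (abs_nonneg _) (by norm_num)
        rw [abs_le]; constructor <;> linarith
      calc |(r/M) * ((M:ℝ)*a/r - vi) + (r/M - n) * vi|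
          ≤ |(r/M) * ((M:ℝ)*a/r - vi)| + |(r/M - n) * vi| := abs_add_le _ _
        _ ≤ (r/M) * (1/2) + 1 * (M + 1/2) := by linarith
        _ = r/(2*M) + (M + 1/2) := by field_simp
    obtain ⟨hv1a, hy1⟩ := coord (z.1 : ℝ) v.1 (abs_fst_le z) rfl
    obtain ⟨hv2a, hy2⟩ := coord (z.2 : ℝ) v.2 (abs_snd_le z) rfl
    -- cast facts for y
    have hy1' : ((y.1 : ℤ) : ℝ) = (z.1 : ℝ) - (n:ℝ) * (v.1 : ℝ) := by
      have : y.1 = z.1 - (n:ℤ) * v.1 := by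
        simp [hydef, Prod.fst_sub, Prod.smul_fst, nsmul_eq_mul]
      rw [this]; push_cast; ring
    have hy2' : ((y.2 : ℤ) : ℝ) = (z.2 : ℝ) - (n:ℝ) * (v.2 : ℝ) := by
      have : y.2 = z.2 - (n:ℤ) * v.2 := by
        simp [hydef, Prod.snd_sub, Prod.smul_snd, nsmul_eq_mul]
      rw [this]; push_cast; ring
    have hy1b : |(y.1 : ℝ)| ≤ r/(2*M) + (M + 1/2) := by rw [hy1']; exact hy1
    have hy2b : |(y.2 : ℝ)| ≤ r/(2*M) + (M + 1/2) := by rw [hy2']; exact hy2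
    have hrM : r / M ≤ r / 2 := by
      apply div_le_div_of_nonneg_left hr0.le (by norm_num) hM2
    -- v lies in the box V
    have toInt : ∀ vi : ℤ, |(vi:ℝ)| ≤ (M:ℝ) + 1/2 → -(M:ℤ) ≤ vi ∧ vi ≤ M := by
      intro vi h
      have h2 := abs_le.1 h
      constructor
      · have hlt : -((M:ℝ)+1) < (vi:ℝ) := by linarith
        have : -((M:ℤ)+1) < vi := by exact_mod_cast hlt
        omega
      · have hlt : (vi:ℝ) < (M:ℝ)+1 := by linarith
        have : vi < (M:ℤ)+1 := by exact_mod_cast hlt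
        omega
    have hvV : v ∈ V := by
      obtain ⟨a1, a2⟩ := toInt v.1 hv1a
      obtain ⟨b1, b2⟩ := toInt v.2 hv2a
      simp only [hVdef, Finset.mem_product, Finset.mem_Icc]
      exact ⟨⟨a1, a2⟩, b1, b2⟩
    -- R pieces
    rw [hRdef] at hz
    have hN₁'r : 4 * (N₁' + M + 1) ≤ r := by
      have h1 : 0 ≤ (M:ℝ) * (N₂ + 1) := by positivity
      have h3 : 0 ≤ 4 * K / ε := by positivity
      linarith
    have hN₂r : (M:ℝ) * (N₂ + 1) ≤ r := by
      have h2 : 0 ≤ 4 * (N₁' + M + 1) := by linarith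
      have h3 : 0 ≤ 4 * K / ε := by positivity
      linarith
    have hKr : K ≤ ε * r / 4 := by
      have h1 : 0 ≤ (M:ℝ) * (N₂ + 1) := by positivity
      have h2 : 0 ≤ 4 * (N₁' + M + 1) := by linarith
      have h4 : 4 * K / ε ≤ r := by linarith
      rw [div_le_iff₀ hε] at h4
      linarith
    -- n is large
    have hnN₂ : N₂ ≤ n := by
      rw [hndef]
      apply Nat.le_floor
      rw [le_div_iff₀ hM0]
      linarith
    -- rnorm / znorm bounds on y
    have h2M : r/(2*M) + r/(2*M) = r/M := by field_simp; ring
    have hrny : rnorm (toR y) ≤ r/M + 2*M + 1 := by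
      simp only [rnorm, toR]
      have := hy1b; have := hy2b
      linarith
    have hzny : znorm y ≤ r/M + 2*M + 1 := le_trans (znorm_le_rnorm y) hrny
    -- n•v = z - y
    have hnveq : n • v = z - y := by rw [hydef]; abel
    have hzeq : n • v + y = z := by rw [hydef]; abel
    -- upper bound on znorm (n•v)
    have hup : znorm (n • v) ≤ 2*r + (r/M + 2*M + 1) := by
      have h1 : znorm (n • v) ≤ rnorm (toR (n • v)) := znorm_le_rnorm _
      have h2 : toR (n • v) = toR z + (-(toR y)) := by
        rw [hnveq, toR_sub]; ring
      rw [h2] at h1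
      have h3 := rnorm_add (toR z) (-(toR y))
      rw [rnorm_neg] at h3
      have h4 := rnorm_toR_le z
      linarith
    have hmaxb : max (znorm (n • v)) (znorm y) ≤ 3*r + 2*M + 1 := by
      apply max_le
      · linarith [hrM]
      · have : r/M ≤ r := by linarith [hrM]
        linarith
    -- lower bound on znorm (n•v)
    have hr2M : r/(2*M) ≤ r/4 := by
      apply div_le_div_of_nonneg_left hr0.le (by norm_num)
      linarith
    have hlow : N₁ ≤ znorm (n • v) := by
      have hsum : r ≤ |(z.1:ℝ)| + |(z.2:ℝ)| := by
        have := znorm_le_rnorm z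
        simpa [rnorm, toR] using this
      have hc1 : (((n • v).1 : ℤ) : ℝ) = (z.1:ℝ) - (y.1:ℝ) := by
        have h : (n • v).1 = z.1 - y.1 := by rw [hnveq]; simp [Prod.fst_sub]
        rw [h]; push_cast; ring
      have hc2 : (((n • v).2 : ℤ) : ℝ) = (z.2:ℝ) - (y.2:ℝ) := by
        have h : (n • v).2 = z.2 - y.2 := by rw [hnveq]; simp [Prod.snd_sub]
        rw [h]; push_cast; ring
      have hN₁le : N₁ ≤ r/4 - M - 1/2 := by
        have : N₁ ≤ N₁' := le_max_left _ _
        linarith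
      rcases le_total |(z.1:ℝ)| |(z.2:ℝ)| with h | h
      · have hz2 : r/2 ≤ |(z.2:ℝ)| := by linarith
        have habs : |(z.2:ℝ)| - |(y.2:ℝ)| ≤ |(z.2:ℝ) - (y.2:ℝ)| :=
          abs_sub_abs_le_abs_sub _ _
        have := abs_snd_le (n • v)
        rw [hc2] at this
        linarith
      · have hz1 : r/2 ≤ |(z.1:ℝ)| := by linarith
        have habs : |(z.1:ℝ)| - |(y.1:ℝ)| ≤ |(z.1:ℝ) - (y.1:ℝ)| :=
          abs_sub_abs_le_abs_sub _ _
        have := abs_fst_le (n • v)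
        rw [hc1] at this
        linarith
    -- shape bound
    have hT2 : T (n • v) z ≤ μ (toR y) + δ * (3*r + 2*M + 1) := by
      have h := hN₁ (n • v) hlow y
      rw [hzeq] at h
      have h1 := (abs_le.1 h).2
      have h2 : δ * max (znorm (n • v)) (znorm y) ≤ δ * (3*r + 2*M + 1) :=
        mul_le_mul_of_nonneg_left hmaxb hδ.le
      linarith
    -- radial bound
    have hterm1 : |B 0 (n • v) - (n:ℝ) * ρ (toR v)| ≤ δ * n := hN₂ v hvV n hnN₂
    -- assemble
    have hBz : B 0 z = B 0 (n • v) + B (n • v) z := hcoc 0 (n • v) z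
    have hρz : ρ (toR z) = (n:ℝ) * ρ (toR v) + ρ (toR y) := by
      have h : toR z = toR (n • v) + toR y := by rw [← hzeq, toR_add]
      rw [h, map_add, toR_nsmul, LinearMap.map_smul, smul_eq_mul]
    have hμy : μ (toR y) ≤ Cμ * (r/M + 2*M + 1) :=
      le_trans (hμb _) (mul_le_mul_of_nonneg_left hrny hCμ)
    have hρy : |ρ (toR y)| ≤ Cρ * (r/M + 2*M + 1) :=
      le_trans (hρb _) (mul_le_mul_of_nonneg_left hrny hCρ)
    have hBnv : |B (n • v) z| ≤ T (n • v) z := hBT _ _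
    have habs2 : |B (n • v) z - ρ (toR y)| ≤ |B (n • v) z| + |ρ (toR y)| :=
      abs_sub _ _
    have hnδ : δ * n ≤ δ * (r/M) := mul_le_mul_of_nonneg_left hnle hδ.le
    have h8 : (Cμ + Cρ) * (r/M) ≤ ε * r / 8 := by
      have e : (Cμ + Cρ) * (r/M) = ((Cμ + Cρ) * r) / M := by ring
      rw [e, div_le_div_iff₀ hM0 (by norm_num : (0:ℝ) < 8)]
      have hh := mul_le_mul_of_nonneg_right hMε hr0.le
      linarith [hh, hr0.le]
    have step : |B 0 z - ρ (toR z)| ≤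
        δ * (r/M) + Cμ * (r/M + 2*M + 1) + δ * (3*r + 2*M + 1)
          + Cρ * (r/M + 2*M + 1) := by
      have e : B 0 z - ρ (toR z) =
          (B 0 (n • v) - (n:ℝ) * ρ (toR v)) + (B (n • v) z - ρ (toR y)) := by
        rw [hBz, hρz]; ring
      rw [e]
      have := abs_add_le (B 0 (n • v) - (n:ℝ) * ρ (toR v)) (B (n • v) z - ρ (toR y))
      linarith
    have hKexp : (δ + Cμ + Cρ) * (2*M + 1) ≤ ε * r / 4 := by rw [← hKdef]; exact hKr
    have hδr : δ * (r/M) ≤ δ * (r/2) := mul_le_mul_of_nonneg_left hrM hδ.le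
    calc |B 0 z - ρ (toR z)| ≤
        δ * (r/M) + Cμ * (r/M + 2*M + 1) + δ * (3*r + 2*M + 1)
          + Cρ * (r/M + 2*M + 1) := step
      _ ≤ ε * r := by
          have e1 : δ * (r/M) ≤ δ * r := by
            apply mul_le_mul_of_nonneg_left _ hδ.le
            linarith
          have e2 : 4 * (δ * r) = ε * r / 8 := by rw [hδdef]; ring
          have e3 := h8
          have e4 := hKexp
          have expand : δ * (r/M) + Cμ * (r/M + 2*M + 1) + δ * (3*r + 2*M + 1)
              + Cρ * (r/M + 2*M + 1)
              = δ * (r/M) + 3 * (δ * r) + (Cμ + Cρ) * (r/M)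
                + (δ + Cμ + Cρ) * (2*M + 1) := by ring
          have hεr : 0 ≤ ε * r := by positivity
          linarith [e1, e2, e3, e4, hεr, expand]
  -- finish: the bad set lies in a finite box
  have hfin : (Set.Icc ((-⌈R⌉, -⌈R⌉) : ℤ × ℤ) (⌈R⌉, ⌈R⌉)).Finite := Set.finite_Icc _ _
  apply hfin.subset
  intro z hzset
  simp only [Set.mem_setOf_eq] at hzset
  have hzR : znorm z < R := by
    by_contra h
    push_neg at h
    have := main z h
    have h2 : 0 ≤ znorm z := znorm_nonneg z
    linarith
  have h1 := abs_fst_le z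
  have h2 := abs_snd_le z
  have hRc : R ≤ ((⌈R⌉ : ℤ) : ℝ) := Int.le_ceil R
  have b1 : -((⌈R⌉:ℤ):ℝ) ≤ (z.1:ℝ) ∧ (z.1:ℝ) ≤ ((⌈R⌉:ℤ):ℝ) := abs_le.1 (by linarith)
  have b2 : -((⌈R⌉:ℤ):ℝ) ≤ (z.2:ℝ) ∧ (z.2:ℝ) ≤ ((⌈R⌉:ℤ):ℝ) := abs_le.1 (by linarith)
  simp only [Set.mem_Icc, Prod.le_def]
  refine ⟨⟨?_, ?_⟩, ?_, ?_⟩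
  · exact_mod_cast b1.1
  · exact_mod_cast b2.1
  · exact_mod_cast b1.2
  · exact_mod_cast b2.2

/-- if `T` satisfies the extended shape theorem with norm `μ`,
`B` is an additive cocycle with `|B| ≤ T`, and `B(0, nv)/n → ρ(v)` a.s. for every
`v ∈ ℤ²` (ρ linear), then almost surely `limsup_{|z|→∞} |B(0,z) − ρ(z)|/|z| = 0`. -/
theorem busemann_uniform_linearity {Ω : Type*} [MeasurableSpace Ω]
    (ℙ : Measure Ω) [IsProbabilityMeasure ℙ]
    (T : Ω → (ℤ × ℤ) → (ℤ × ℤ) → ℝ)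
    (μ : ℝ × ℝ → ℝ)
    (hsub : ∀ x y : ℝ × ℝ, μ (x + y) ≤ μ x + μ y)
    (hhom : ∀ (r : ℝ) (x : ℝ × ℝ), μ (r • x) = |r| * μ x)
    (hdef : ∀ x : ℝ × ℝ, μ x = 0 → x = 0)
    (hext : ∀ ε : ℝ, 0 < ε → ∀ᵐ ω ∂ℙ, ∃ N : ℝ,
      ∀ z : ℤ × ℤ, N ≤ znorm z →
        ∀ y : ℤ × ℤ, |T ω z (z + y) - μ (toR y)| ≤ ε * max (znorm z) (znorm y))
    (B : Ω → (ℤ × ℤ) → (ℤ × ℤ) → ℝ)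
    (hcoc : ∀ (ω : Ω) (x y z : ℤ × ℤ), B ω x z = B ω x y + B ω y z)
    (hBT : ∀ (ω : Ω) (x y : ℤ × ℤ), |B ω x y| ≤ T ω x y)
    (ρ : ℝ × ℝ →ₗ[ℝ] ℝ)
    (hrad : ∀ v : ℤ × ℤ, ∀ᵐ ω ∂ℙ,
      Tendsto (fun n : ℕ => B ω 0 (n • v) / (n : ℝ)) atTop (nhds (ρ (toR v)))) :
    ∀ᵐ ω ∂ℙ, ∀ ε : ℝ, 0 < ε →
      {z : ℤ × ℤ | ε * znorm z < |B ω 0 z - ρ (toR z)|}.Finite := by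
    -- basic facts about μ
  have hμ0 : μ 0 = 0 := by
    have h := hhom 0 (0 : ℝ × ℝ)
    simpa using h
  have hμnn : ∀ x : ℝ × ℝ, 0 ≤ μ x := by
    intro x
    have h1 : μ (x + (-x)) ≤ μ x + μ (-x) := hsub x (-x)
    have h2 : μ (-x) = μ x := by
      have h := hhom (-1) x
      simpa using h
    rw [add_neg_cancel, hμ0, h2] at h1
    linarith
  set Cμ : ℝ := μ (1, 0) + μ (0, 1) with hCμdef
  set Cρ : ℝ := |ρ (1, 0)| + |ρ (0, 1)| with hCρdef
  have hCμ : 0 ≤ Cμ := add_nonneg (hμnn _) (hμnn _)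
  have hCρ : 0 ≤ Cρ := add_nonneg (abs_nonneg _) (abs_nonneg _)
  have hdecomp : ∀ x : ℝ × ℝ,
      x = x.1 • ((1:ℝ), (0:ℝ)) + x.2 • ((0:ℝ), (1:ℝ)) := by
    intro x
    simp [Prod.ext_iff]
  have hμb : ∀ x : ℝ × ℝ, μ x ≤ Cμ * rnorm x := by
    intro x
    calc μ x = μ (x.1 • ((1:ℝ), (0:ℝ)) + x.2 • ((0:ℝ), (1:ℝ))) := by
          rw [← hdecomp]
      _ ≤ μ (x.1 • ((1:ℝ), (0:ℝ))) + μ (x.2 • ((0:ℝ), (1:ℝ))) := hsub _ _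
      _ = |x.1| * μ (1, 0) + |x.2| * μ (0, 1) := by rw [hhom, hhom]
      _ ≤ Cμ * rnorm x := by
          simp only [rnorm, hCμdef]
          nlinarith [mul_nonneg (hμnn ((1:ℝ), (0:ℝ))) (abs_nonneg x.2),
            mul_nonneg (hμnn ((0:ℝ), (1:ℝ))) (abs_nonneg x.1)]
  have hρb : ∀ x : ℝ × ℝ, |ρ x| ≤ Cρ * rnorm x := by
    intro x
    have e : ρ x = x.1 * ρ (1, 0) + x.2 * ρ (0, 1) := by
      conv_lhs => rw [hdecomp x]
      rw [map_add, LinearMap.map_smul, LinearMap.map_smul, smul_eq_mul, smul_eq_mul]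
    calc |ρ x| ≤ |x.1 * ρ (1, 0)| + |x.2 * ρ (0, 1)| := by
          rw [e]; exact abs_add_le _ _
      _ = |x.1| * |ρ (1, 0)| + |x.2| * |ρ (0, 1)| := by rw [abs_mul, abs_mul]
      _ ≤ Cρ * rnorm x := by
          simp only [rnorm, hCρdef]
          nlinarith [mul_nonneg (abs_nonneg (ρ ((1:ℝ), (0:ℝ)))) (abs_nonneg x.2),
            mul_nonneg (abs_nonneg (ρ ((0:ℝ), (1:ℝ)))) (abs_nonneg x.1)]
  -- combine almost-sure events
  have hA : ∀ᵐ ω ∂ℙ, ∀ v : ℤ × ℤ,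
      Tendsto (fun n : ℕ => B ω 0 (n • v) / (n : ℝ)) atTop (nhds (ρ (toR v))) :=
    ae_all_iff.2 hrad
  have hB2 : ∀ᵐ ω ∂ℙ, ∀ k : ℕ, ∃ N : ℝ, ∀ z : ℤ × ℤ, N ≤ znorm z →
      ∀ y : ℤ × ℤ, |T ω z (z + y) - μ (toR y)| ≤
        (1 / ((k:ℝ) + 1)) * max (znorm z) (znorm y) :=
    ae_all_iff.2 fun k => hext (1 / ((k:ℝ) + 1)) (by positivity)
  filter_upwards [hA, hB2] with ω hωA hωB ε hε
  apply key_finite (T ω) μ Cμ Cρ hCμ hCρ hμb (B ω) (hcoc ω) (hBT ω) ρ hρb ?_ hωA ε hε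
  intro d hd
  obtain ⟨k, hk⟩ := exists_nat_one_div_lt hd
  obtain ⟨N, hN⟩ := hωB k
  refine ⟨N, fun z hz y => le_trans (hN z hz y) ?_⟩
  apply mul_le_mul_of_nonneg_right hk.le
  exact le_max_of_le_left (znorm_nonneg z)
end
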